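/- Let R be a Riesz space of real-valued functions over Z, and let M ⊆ F(Z) be a set satisfying R ⊆ M and P(M) ⊆ M, where P(M) is the set of all pointwise limits of sequences in M dominated in absolute value by the first element of the sequence. Then L(R) ⊆ M, where L(R) is the smallest Lebesgue lattice containing R. -/
import Mathlib


open Filter Topology

/-- `Pdom M`: dominated pointwise limits of sequences in `M`
(sequence `f₀, f₁, …` with `|fₙ| ≤ f₀` for `n ≥ 1`, converging pointwise). -/
def Pdom {Z : Type*} (M : Set (Z → ℝ)) : Set (Z → ℝ) :=
  { f | ∃ F : ℕ → Z → ℝ, (∀ n, F n ∈ M) ∧ (∀ n, |F (n + 1)| ≤ F 0) ∧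
      ∀ z, Tendsto (fun n => F n z) atTop (𝓝 (f z)) }

/-- `U` is a vector subspace of the functions `Z → ℝ`. -/
def IsSubspace {Z : Type*} (U : Set (Z → ℝ)) : Prop :=
  (0 : Z → ℝ) ∈ U ∧ (∀ f g, f ∈ U → g ∈ U → f + g ∈ U) ∧
    ∀ (c : ℝ) (f), f ∈ U → c • f ∈ U

/-- A Riesz space of functions: a subspace closed under pointwise absolute value. -/
def IsRiesz {Z : Type*} (R : Set (Z → ℝ)) : Prop :=
  IsSubspace R ∧ ∀ f, f ∈ R → |f| ∈ R

/-- A Lebesgue lattice: a Riesz space closed under dominated pointwise limits. -/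
def IsLebesgue {Z : Type*} (L : Set (Z → ℝ)) : Prop :=
  IsRiesz L ∧ Pdom L ⊆ L

/-- smallest Riesz space containing `M`. -/
def RGen {Z : Type*} (M : Set (Z → ℝ)) : Set (Z → ℝ) :=
  ⋂₀ { R | IsRiesz R ∧ M ⊆ R }

/-- smallest Lebesgue lattice containing `M`. -/
def LGen {Z : Type*} (M : Set (Z → ℝ)) : Set (Z → ℝ) :=
  ⋂₀ { L | IsLebesgue L ∧ M ⊆ L }

/-- Daniell integral on `R`: additive, homogeneous, monotone, continuous under
decreasing convergence to `0`. -/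
def IsDaniell {Z : Type*} (R : Set (Z → ℝ)) (I : (Z → ℝ) → ℝ) : Prop :=
  IsRiesz R ∧
  (∀ f g, f ∈ R → g ∈ R → I (f + g) = I f + I g) ∧
  (∀ (c : ℝ) (f), f ∈ R → I (c • f) = c * I f) ∧
  (∀ f, f ∈ R → I f ≤ I |f|) ∧
  ∀ F : ℕ → Z → ℝ, (∀ n, F n ∈ R) → (∀ n, 0 ≤ F (n + 1)) →
    (∀ n, F (n + 1) ≤ F n) →
    (∀ z, Tendsto (fun n => F n z) atTop (𝓝 0)) →
    Tendsto (fun n => I (F n)) atTop (𝓝 0)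

/-- elementary tensor `(g ⊗ h)(x, y) = g x * h y`. -/
def tensor {X Y : Type*} (g : X → ℝ) (h : Y → ℝ) : X × Y → ℝ :=
  fun p => g p.1 * h p.2

/-- tensor product `V ⊗ W`: finite sums of elementary tensors. -/
def TensorSet {X Y : Type*} (V : Set (X → ℝ)) (W : Set (Y → ℝ)) :
    Set (X × Y → ℝ) :=
  { f | ∃ (k : ℕ) (g : Fin k → X → ℝ) (h : Fin k → Y → ℝ),
      (∀ i, g i ∈ V) ∧ (∀ i, h i ∈ W) ∧ f = ∑ i, tensor (g i) (h i) }

/-- `iterP U m`: `U₁ = U`, `U_{m+1} = P(U_m)` (0-indexed). -/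
def iterP {Z : Type*} (U : Set (Z → ℝ)) : ℕ → Set (Z → ℝ)
  | 0 => U
  | n + 1 => Pdom (iterP U n)

theorem stmt1 {Z : Type*} (R M : Set (Z → ℝ)) (hR : IsRiesz R)
    (hRM : R ⊆ M) (hPM : Pdom M ⊆ M) : LGen R ⊆ M := by
  classical
  set S : Set (Z → ℝ) := ⋂₀ {N | R ⊆ N ∧ Pdom N ⊆ N} with hS
  have hmin : ∀ N : Set (Z → ℝ), R ⊆ N → Pdom N ⊆ N → S ⊆ N :=
    fun N h1 h2 f hf => hf N ⟨h1, h2⟩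
  have hRS : R ⊆ S := fun f hf => Set.mem_sInter.2 fun N hN => hN.1 hf
  have hmono : ∀ A B : Set (Z → ℝ), A ⊆ B → Pdom A ⊆ Pdom B := by
    rintro A B hAB f ⟨F, h1, h2, h3⟩
    exact ⟨F, fun n => hAB (h1 n), h2, h3⟩
  have hPS : Pdom S ⊆ S := by
    intro f hf
    refine Set.mem_sInter.2 fun N hN => hN.2 (hmono _ _ (fun g hg => Set.mem_sInter.1 hg N hN) hf)
  have hSM : S ⊆ M := hmin M hRM hPM
  -- shift lemma for sequences
  have shift : ∀ (G H : ℕ → ℝ) (l : ℝ), (∀ n, G (n + 1) = H (n + 1)) →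
      Tendsto H atTop (𝓝 l) → Tendsto G atTop (𝓝 l) := by
    intro G H l hGH hH
    have h1 : Tendsto (fun n => H (n + 1)) atTop (𝓝 l) :=
      (tendsto_add_atTop_iff_nat 1).2 hH
    have h2 : Tendsto (fun n => G (n + 1)) atTop (𝓝 l) := by
      simpa [hGH] using h1
    exact (tendsto_add_atTop_iff_nat 1).1 h2
  -- closure under absolute value
  have habs : ∀ f ∈ S, |f| ∈ S := by
    have key : S ⊆ {f | f ∈ S ∧ |f| ∈ S} := by
      apply hmin
      · exact fun f hf => ⟨hRS hf, hRS (hR.2 f hf)⟩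
      · rintro f ⟨F, h1, h2, h3⟩
        have hfS : f ∈ S := hPS ⟨F, fun n => (h1 n).1, h2, h3⟩
        refine ⟨hfS, hPS ?_⟩
        refine ⟨fun n => match n with | 0 => F 0 | (k+1) => |F (k+1)|, ?_, ?_, ?_⟩
        · intro n; match n with
          | 0 => exact (h1 0).1
          | (k+1) => exact (h1 (k+1)).2
        · intro n z
          simpa [abs_abs] using h2 n z
        · intro z
          refine shift _ (fun n => |F n z|) _ (fun n => rfl) ?_
          exact (h3 z).abs
    exact fun f hf => (key hf).2
  -- closure under scalar multiplication
  have hsmul : ∀ (c : ℝ), ∀ f ∈ S, c • f ∈ S := by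
    have key : S ⊆ {f | f ∈ S ∧ ∀ c : ℝ, c • f ∈ S} := by
      apply hmin
      · exact fun f hf => ⟨hRS hf, fun c => hRS (hR.1.2.2 c f hf)⟩
      · rintro f ⟨F, h1, h2, h3⟩
        have hfS : f ∈ S := hPS ⟨F, fun n => (h1 n).1, h2, h3⟩
        refine ⟨hfS, fun c => hPS ?_⟩
        refine ⟨fun n => match n with | 0 => |c| • F 0 | (k+1) => c • F (k+1), ?_, ?_, ?_⟩
        · intro n; match n with
          | 0 => exact (h1 0).2 |c|
          | (k+1) => exact (h1 (k+1)).2 c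
        · intro n z
          have := h2 n z
          simp only [Pi.abs_apply, Pi.smul_apply, smul_eq_mul] at this ⊢
          rw [abs_mul]
          exact mul_le_mul_of_nonneg_left this (abs_nonneg c)
        · intro z
          refine shift _ (fun n => c * F n z) _ (fun n => rfl) ?_
          exact (h3 z).const_mul c
    exact fun c f hf => (key hf).2 c
  -- step 1: f ∈ S, g ∈ R ⇒ f + g ∈ S
  have hadd1 : ∀ f ∈ S, ∀ g ∈ R, f + g ∈ S := by
    have key : S ⊆ {f | f ∈ S ∧ ∀ g ∈ R, f + g ∈ S} := by
      apply hmin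
      · exact fun f hf => ⟨hRS hf, fun g hg => hRS (hR.1.2.1 f g hf hg)⟩
      · rintro f ⟨F, h1, h2, h3⟩
        have hfS : f ∈ S := hPS ⟨F, fun n => (h1 n).1, h2, h3⟩
        refine ⟨hfS, fun g hg => hPS ?_⟩
        refine ⟨fun n => match n with | 0 => F 0 + |g| | (k+1) => F (k+1) + g, ?_, ?_, ?_⟩
        · intro n; match n with
          | 0 => exact (h1 0).2 |g| (hR.2 g hg)
          | (k+1) => exact (h1 (k+1)).2 g hg
        · intro n z
          have := h2 n z
          simp only [Pi.abs_apply, Pi.add_apply] at this ⊢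
          calc |F (n+1) z + g z| ≤ |F (n+1) z| + |g z| := abs_add_le _ _
            _ ≤ F 0 z + |g z| := by linarith
        · intro z
          refine shift _ (fun n => F n z + g z) _ (fun n => rfl) ?_
          exact (h3 z).add_const (g z)
    exact fun f hf => (key hf).2
  -- step 2: f, g ∈ S ⇒ f + g ∈ S
  have hadd2 : ∀ f ∈ S, ∀ g ∈ S, f + g ∈ S := by
    have key : S ⊆ {f | f ∈ S ∧ ∀ g ∈ S, f + g ∈ S} := by
      apply hmin
      · intro f hf
        refine ⟨hRS hf, fun g hg => ?_⟩
        have := hadd1 g hg f hf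
        rwa [add_comm] at this
      · rintro f ⟨F, h1, h2, h3⟩
        have hfS : f ∈ S := hPS ⟨F, fun n => (h1 n).1, h2, h3⟩
        refine ⟨hfS, fun g hg => hPS ?_⟩
        refine ⟨fun n => match n with | 0 => F 0 + |g| | (k+1) => F (k+1) + g, ?_, ?_, ?_⟩
        · intro n; match n with
          | 0 => exact (h1 0).2 |g| (habs g hg)
          | (k+1) => exact (h1 (k+1)).2 g hg
        · intro n z
          have := h2 n z
          simp only [Pi.abs_apply, Pi.add_apply] at this ⊢
          calc |F (n+1) z + g z| ≤ |F (n+1) z| + |g z| := abs_add_le _ _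
            _ ≤ F 0 z + |g z| := by linarith
        · intro z
          refine shift _ (fun n => F n z + g z) _ (fun n => rfl) ?_
          exact (h3 z).add_const (g z)
    exact fun f hf => (key hf).2
  have hLeb : IsLebesgue S := by
    refine ⟨⟨⟨hRS hR.1.1, fun f g hf hg => hadd2 f hf g hg, fun c f hf => hsmul c f hf⟩,
      fun f hf => habs f hf⟩, hPS⟩
  intro f hf
  exact hSM (Set.mem_sInter.1 hf S ⟨hLeb, hRS⟩)
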